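/- Let f ∈ L¹([0,1]) and suppose f is not absolutely continuous (as a function of bounded variation with f(0)=0, it fails the ε-δ characterization: there exist ε>0 and disjoint intervals (r_i^n, s_i^n) ⊆ [0,1] with ∑_i (s_i^n − r_i^n) → 0 but ∑_i |f(s_i^n) − f(r_i^n)| ≥ ε for all n). Let Λ : ℝ^d → ℝ be convex with Λ(0)=0 and Λ(λ)=O(|λ|²) near 0, and for 1/2<α<1 let Λ^{rl}_{t₁,…,t_k} be as above. Then sup over finite partitions (t₁,…,t_k) of sup over λ̄ of ∑_i λ_i·(f(t_i) − f(t_{i−1})) − Λ^{rl}_{t₁,…,t_k}(λ̄) equals +∞. -/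

import Mathlib

open MeasureTheory Matrix

section Helpers

open intervalIntegral Real Set Matrix


lemma sum_range_two_mul' {M : Type*} [AddCommMonoid M] (m : ℕ) (F : ℕ → M) :
    ∑ i ∈ Finset.range (2 * m), F i
      = ∑ j ∈ Finset.range m, (F (2 * j) + F (2 * j + 1)) := by
  induction m with
  | zero => simp
  | succ m ih =>
      rw [Nat.mul_succ, Finset.sum_range_succ, Finset.sum_range_succ, Finset.sum_range_succ, ih,
        add_assoc]

lemma rpow_neg_anti {a b γ : ℝ} (ha : 0 < a) (hab : a ≤ b) (hγ : 0 ≤ γ) :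
    b ^ (-γ) ≤ a ^ (-γ) := by
  have hb : 0 < b := lt_of_lt_of_le ha hab
  rw [Real.rpow_neg ha.le, Real.rpow_neg hb.le]
  have h1 : 0 < a ^ γ := Real.rpow_pos_of_pos ha γ
  exact inv_anti₀ h1 (Real.rpow_le_rpow ha.le hab hγ)

lemma intervalIntegrable_abs_rpow {c : ℝ} (hc : -1 < c) (a b : ℝ) :
    IntervalIntegrable (fun y : ℝ => |y| ^ c) volume a b := by
  have h0 : ∀ t : ℝ, 0 ≤ t → IntervalIntegrable (fun y : ℝ => |y| ^ c) volume 0 t := by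
    intro t ht
    have h := intervalIntegrable_rpow' (a := 0) (b := t) hc
    rw [intervalIntegrable_iff] at h ⊢
    refine h.congr_fun ?_ measurableSet_uIoc
    intro y hy
    rw [Set.uIoc_of_le ht] at hy
    simp [abs_of_pos hy.1]
  have h0' : ∀ t : ℝ, IntervalIntegrable (fun y : ℝ => |y| ^ c) volume 0 t := by
    intro t
    rcases le_total 0 t with ht | ht
    · exact h0 t ht
    · rw [IntervalIntegrable.iff_comp_neg]
      simpa [abs_neg] using h0 (-t) (by linarith)
  exact ((h0' a).symm.trans (h0' b))

lemma sum_intervalIntegral_le {g : ℝ → ℝ}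
    (hg0 : ∀ y, 0 ≤ g y) (hgi : ∀ a b, IntervalIntegrable g volume a b) :
    ∀ (m : ℕ) (a b : ℕ → ℝ) (A B : ℝ), A ≤ B →
    (∀ j < m, A ≤ a j) → (∀ j < m, a j ≤ b j) → (∀ j < m, b j ≤ B) →
    (∀ j, j + 1 < m → b j ≤ a (j + 1)) →
    ∑ j ∈ Finset.range m, ∫ y in (a j)..(b j), g y ≤ ∫ y in A..B, g y := by
  intro m
  induction m with
  | zero =>
      intro a b A B hAB _ _ _ _
      simpa using intervalIntegral.integral_nonneg hAB (fun u _ => hg0 u)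
  | succ m ih =>
      intro a b A B hAB hA hab hbB hchain
      have mono : ∀ k, k < m + 1 → ∀ j, j < k → b j ≤ a k := by
        intro k
        induction k with
        | zero => intro _ j hj; omega
        | succ k ihk =>
            intro hk j hj
            rcases Nat.lt_succ_iff_lt_or_eq.mp hj with h | h
            · exact le_trans (ihk (by omega) j h)
                (le_trans (hab k (by omega)) (hchain k (by omega)))
            · subst h; exact hchain j (by omega)
      have hAam : A ≤ a m := hA m (by omega)
      have hambm : a m ≤ b m := hab m (by omega)
      have step1 : ∑ j ∈ Finset.range m, ∫ y in (a j)..(b j), g y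
          ≤ ∫ y in A..(a m), g y := by
        refine ih a b A (a m) hAam (fun j hj => hA j (by omega))
          (fun j hj => hab j (by omega)) (fun j hj => mono m (by omega) j hj)
          (fun j hj => hchain j (by omega))
      calc ∑ j ∈ Finset.range (m + 1), ∫ y in (a j)..(b j), g y
          = (∑ j ∈ Finset.range m, ∫ y in (a j)..(b j), g y)
            + ∫ y in (a m)..(b m), g y := Finset.sum_range_succ _ m
        _ ≤ (∫ y in A..(a m), g y) + ∫ y in (a m)..(b m), g y := by
            exact add_le_add_left step1 _
        _ = ∫ y in A..(b m), g y :=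
            integral_add_adjacent_intervals (hgi A (a m)) (hgi (a m) (b m))
        _ ≤ ∫ y in A..B, g y := by
            refine integral_mono_interval le_rfl (le_trans hAam hambm) (hbB m (by omega))
              (Filter.Eventually.of_forall fun y => hg0 y) (hgi A B)

lemma exists_dual_sup {d : ℕ} (v : Fin d → ℝ) :
    ∃ w : Fin d → ℝ, ‖w‖ ≤ 1 ∧ w ⬝ᵥ v = ‖v‖ := by
  rcases eq_or_ne v 0 with rfl | hv
  · exact ⟨0, by simp, by simp⟩
  · obtain ⟨i, hi⟩ := Function.ne_iff.mp hv
    have : Nonempty (Fin d) := ⟨i⟩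
    have hd : (Finset.univ : Finset (Fin d)).Nonempty := Finset.univ_nonempty
    obtain ⟨i₀, -, hi₀⟩ := Finset.exists_mem_eq_sup (Finset.univ : Finset (Fin d)) hd
      (fun i => ‖v i‖₊)
    have h1 : ‖v‖₊ = ‖v i₀‖₊ := by rw [Pi.nnnorm_def, hi₀]
    have hnorm : ‖v‖ = |v i₀| := by
      rw [← coe_nnnorm, h1, coe_nnnorm, Real.norm_eq_abs]
    refine ⟨Pi.single i₀ (if 0 ≤ v i₀ then (1:ℝ) else -1), ?_, ?_⟩
    · refine (pi_norm_le_iff_of_nonneg (by norm_num)).mpr fun j => ?_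
      rcases eq_or_ne j i₀ with rfl | hj
      · rw [Pi.single_eq_same]; split_ifs <;> simp
      · rw [Pi.single_eq_of_ne hj]; simp
    · rw [single_dotProduct, hnorm]
      split_ifs with h
      · rw [one_mul, abs_of_nonneg h]
      · rw [neg_one_mul, abs_of_neg (not_le.mp h)]

lemma integrable_max_abs_rpow {b : ℝ} (hb : b < -1) :
    Integrable (fun x : ℝ => (max |x| 2) ^ b) volume := by
  have hcont : Continuous fun x : ℝ => (max |x| 2) ^ b := by
    refine Continuous.rpow_const (continuous_abs.max continuous_const) fun x => Or.inl ?_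
    have h2 : (2:ℝ) ≤ max |x| 2 := le_max_right _ _
    positivity
  have hIoi : IntegrableOn (fun x : ℝ => (max |x| 2) ^ b) (Ioi 2) volume := by
    refine (integrableOn_Ioi_rpow_of_lt hb (by norm_num : (0:ℝ) < 2)).congr_fun ?_
      measurableSet_Ioi
    intro x hx
    have hx2 : (2:ℝ) < x := hx
    show x ^ b = (max |x| 2) ^ b
    rw [abs_of_pos (by linarith), max_eq_left (by linarith)]
  have hIio : IntegrableOn (fun x : ℝ => (max |x| 2) ^ b) (Iio (-2)) volume := by
    have h := (MeasurePreserving.integrableOn_comp_preimage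
      (Measure.measurePreserving_neg (volume : Measure ℝ))
      (Homeomorph.neg ℝ).measurableEmbedding).2 hIoi
    have heq : ((fun x : ℝ => (max |x| 2) ^ b) ∘ (Neg.neg : ℝ → ℝ))
        = fun x : ℝ => (max |x| 2) ^ b := by
      funext x; simp [Function.comp, abs_neg]
    have hpre : ((Neg.neg : ℝ → ℝ) ⁻¹' Ioi 2) = Iio (-2) := by
      ext x; simp only [mem_preimage, mem_Ioi, mem_Iio]; constructor <;> intro <;> linarith
    rwa [heq, hpre] at h
  have hIcc : IntegrableOn (fun x : ℝ => (max |x| 2) ^ b) (Icc (-2) 2) volume :=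
    hcont.integrableOn_Icc
  have hcover : (univ : Set ℝ) = Iio (-2) ∪ (Icc (-2) 2 ∪ Ioi 2) := by
    ext x; simp only [mem_univ, true_iff, mem_union, mem_Iio, mem_Icc, mem_Ioi]
    by_cases h : x < -2
    · exact Or.inl h
    · rcases le_or_gt x 2 with h2 | h2
      · exact Or.inr (Or.inl ⟨by linarith, h2⟩)
      · exact Or.inr (Or.inr h2)
  rw [← integrableOn_univ, hcover]
  exact hIio.union (hIcc.union hIoi)
section
variable {α : ℝ} (hα0 : 0 < α) (hα1 : α < 1) {g : ℝ → ℝ}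
  (hg0 : ∀ y, 0 ≤ g y) (hgle : ∀ y, g y ≤ |y| ^ (-α)) (hgm : Measurable g)

include hα0 hα1 hg0 hgle hgm

lemma g_intervalIntegrable (a b : ℝ) : IntervalIntegrable g volume a b := by
  refine (intervalIntegrable_abs_rpow (c := -α) (by linarith) a b).mono_fun
    hgm.aestronglyMeasurable ?_
  refine Filter.Eventually.of_forall fun y => ?_
  show ‖g y‖ ≤ ‖|y| ^ (-α)‖
  rw [Real.norm_eq_abs, Real.norm_eq_abs, abs_of_nonneg (hg0 y),
    abs_of_nonneg (Real.rpow_nonneg (abs_nonneg y) _)]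
  exact hgle y

lemma sigma_bound1 (m : ℕ) (a b : ℕ → ℝ) (x : ℝ)
    (hxa : ∀ j < m, x ≤ a j) (hab : ∀ j < m, a j ≤ b j) (hbx : ∀ j < m, b j ≤ x + 1)
    (hchain : ∀ j, j + 1 < m → b j ≤ a (j + 1))
    {ℓ : ℝ} (hℓ : 0 < ℓ) (hsum : ∑ j ∈ Finset.range m, (b j - a j) ≤ ℓ) :
    ∑ j ∈ Finset.range m, ∫ y in (a j)..(b j), g y
      ≤ (1 + 2 / (1 - α)) * ℓ ^ (1 - α) := by
  have h1α : (0:ℝ) < 1 - α := by linarith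
  set φ : ℝ → ℝ := Set.indicator (Ioc (-ℓ) ℓ) (fun y => |y| ^ (-α)) with hφ
  set ψ : ℝ → ℝ := fun y => min (|y| ^ (-α)) (ℓ ^ (-α)) with hψ
  have hφ0 : ∀ y, 0 ≤ φ y := fun y =>
    Set.indicator_nonneg (fun y _ => Real.rpow_nonneg (abs_nonneg y) _) y
  have hψ0 : ∀ y, 0 ≤ ψ y := fun y =>
    le_min (Real.rpow_nonneg (abs_nonneg y) _) (Real.rpow_nonneg hℓ.le _)
  have hptwise : ∀ y, g y ≤ ψ y + φ y := by
    intro y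
    rcases le_or_gt ℓ |y| with h | h
    · have : |y| ^ (-α) ≤ ℓ ^ (-α) := rpow_neg_anti hℓ h hα0.le
      have hmin : ψ y = |y| ^ (-α) := min_eq_left this
      have := hgle y
      have := hφ0 y
      linarith [hgle y, hφ0 y, hmin.ge]
    · have hy : y ∈ Ioc (-ℓ) ℓ := by
        constructor
        · cases' abs_lt.mp h with h1 h2; linarith
        · cases' abs_lt.mp h with h1 h2; linarith
      have hφy : φ y = |y| ^ (-α) := Set.indicator_of_mem hy _
      have := hψ0 y
      linarith [hgle y]
  have hφm : Measurable φ := by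
    exact (measurable_id.abs.pow_const _).indicator measurableSet_Ioc
  have habs_int : ∀ a b : ℝ, IntervalIntegrable (fun y : ℝ => |y| ^ (-α)) volume a b :=
    fun a b => intervalIntegrable_abs_rpow (by linarith) a b
  have hφle : ∀ y, φ y ≤ |y| ^ (-α) := by
    intro y
    by_cases hy : y ∈ Ioc (-ℓ) ℓ
    · rw [hφ, Set.indicator_of_mem hy]
    · rw [hφ, Set.indicator_of_notMem hy]
      exact Real.rpow_nonneg (abs_nonneg y) _
  have hψle : ∀ y, ψ y ≤ |y| ^ (-α) := fun y => min_le_left _ _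
  have hφint : ∀ a b, IntervalIntegrable φ volume a b := by
    intro a b
    refine (habs_int a b).mono_fun hφm.aestronglyMeasurable ?_
    refine Filter.Eventually.of_forall fun y => ?_
    show ‖φ y‖ ≤ ‖|y| ^ (-α)‖
    rw [Real.norm_eq_abs, Real.norm_eq_abs, abs_of_nonneg (hφ0 y),
      abs_of_nonneg (Real.rpow_nonneg (abs_nonneg y) _)]
    exact hφle y
  have hψm : Measurable ψ := (measurable_id.abs.pow_const _).min measurable_const
  have hψint : ∀ a b, IntervalIntegrable ψ volume a b := by
    intro a b
    refine (habs_int a b).mono_fun hψm.aestronglyMeasurable ?_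
    refine Filter.Eventually.of_forall fun y => ?_
    show ‖ψ y‖ ≤ ‖|y| ^ (-α)‖
    rw [Real.norm_eq_abs, Real.norm_eq_abs, abs_of_nonneg (hψ0 y),
      abs_of_nonneg (Real.rpow_nonneg (abs_nonneg y) _)]
    exact hψle y
  have hgint : ∀ a b, IntervalIntegrable g volume a b :=
    g_intervalIntegrable hα0 hα1 hg0 hgle hgm
  have step0 : ∑ j ∈ Finset.range m, ∫ y in (a j)..(b j), g y
      ≤ (∑ j ∈ Finset.range m, ∫ y in (a j)..(b j), ψ y)
        + ∑ j ∈ Finset.range m, ∫ y in (a j)..(b j), φ y := by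
    rw [← Finset.sum_add_distrib]
    refine Finset.sum_le_sum fun j hj => ?_
    have hj' := Finset.mem_range.mp hj
    rw [← intervalIntegral.integral_add (hψint _ _) (hφint _ _)]
    exact intervalIntegral.integral_mono_on (hab j hj') (hgint _ _)
      ((hψint _ _).add (hφint _ _)) (fun y _ => hptwise y)
  have S1 : ∑ j ∈ Finset.range m, ∫ y in (a j)..(b j), ψ y ≤ ℓ ^ (1 - α) := by
    have each : ∀ j < m, ∫ y in (a j)..(b j), ψ y ≤ (b j - a j) * ℓ ^ (-α) := by
      intro j hj
      have := intervalIntegral.integral_mono_on (μ := volume) (hab j hj) (hψint _ _)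
        intervalIntegrable_const (g := fun _ => ℓ ^ (-α)) (fun y _ => min_le_right _ _)
      rwa [intervalIntegral.integral_const, smul_eq_mul] at this
    calc ∑ j ∈ Finset.range m, ∫ y in (a j)..(b j), ψ y
        ≤ ∑ j ∈ Finset.range m, (b j - a j) * ℓ ^ (-α) :=
          Finset.sum_le_sum fun j hj => each j (Finset.mem_range.mp hj)
      _ = (∑ j ∈ Finset.range m, (b j - a j)) * ℓ ^ (-α) := by
          rw [Finset.sum_mul]
      _ ≤ ℓ * ℓ ^ (-α) :=
          mul_le_mul_of_nonneg_right hsum (Real.rpow_nonneg hℓ.le _)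
      _ = ℓ ^ (1 - α) := by
          rw [show ℓ * ℓ ^ (-α) = ℓ ^ (1:ℝ) * ℓ ^ (-α) by rw [Real.rpow_one],
            ← Real.rpow_add hℓ]
          ring_nf
  have S2 : ∑ j ∈ Finset.range m, ∫ y in (a j)..(b j), φ y
      ≤ 2 / (1 - α) * ℓ ^ (1 - α) := by
    have hsum2 := sum_intervalIntegral_le hφ0 hφint m a b x (x + 1)
      (by linarith) hxa hab hbx hchain
    have hIocInt : IntegrableOn (fun y : ℝ => |y| ^ (-α)) (Ioc (-ℓ) ℓ) volume := by
      have := (habs_int (-ℓ) ℓ)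
      rwa [intervalIntegrable_iff, Set.uIoc_of_le (by linarith : -ℓ ≤ ℓ)] at this
    have hint : Integrable φ volume :=
      (integrable_indicator_iff measurableSet_Ioc).mpr hIocInt
    have h2 : (∫ y in x..(x + 1), φ y) ≤ ∫ y, φ y := by
      rw [intervalIntegral.integral_of_le (by linarith : x ≤ x + 1)]
      exact setIntegral_le_integral hint (Filter.Eventually.of_forall hφ0)
    have J : (∫ y in (0:ℝ)..ℓ, |y| ^ (-α)) = ℓ ^ (1 - α) / (1 - α) := by
      rw [intervalIntegral.integral_congr (g := fun y : ℝ => y ^ (-α)) ?_]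
      · rw [integral_rpow (Or.inl (by linarith : (-1:ℝ) < -α)),
          Real.zero_rpow (ne_of_gt (by linarith : (0:ℝ) < -α + 1))]
        rw [show -α + 1 = 1 - α by ring]
        ring
      · intro y hy
        rw [Set.uIcc_of_le hℓ.le] at hy
        simp [abs_of_nonneg hy.1]
    have Jneg : (∫ y in (-ℓ)..(0:ℝ), |y| ^ (-α)) = ∫ y in (0:ℝ)..ℓ, |y| ^ (-α) := by
      have := intervalIntegral.integral_comp_neg (a := (0:ℝ)) (b := ℓ)
        (f := fun y : ℝ => |y| ^ (-α))
      simp only [abs_neg, neg_zero] at this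
      rw [← this]
    have h3 : (∫ y, φ y) = 2 / (1 - α) * ℓ ^ (1 - α) := by
      rw [hφ, MeasureTheory.integral_indicator measurableSet_Ioc,
        ← intervalIntegral.integral_of_le (by linarith : -ℓ ≤ ℓ),
        ← intervalIntegral.integral_add_adjacent_intervals
          (habs_int (-ℓ) 0) (habs_int 0 ℓ), Jneg, J]
      ring
    calc ∑ j ∈ Finset.range m, ∫ y in (a j)..(b j), φ y
        ≤ ∫ y in x..(x + 1), φ y := hsum2
      _ ≤ ∫ y, φ y := h2
      _ = 2 / (1 - α) * ℓ ^ (1 - α) := h3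
  calc ∑ j ∈ Finset.range m, ∫ y in (a j)..(b j), g y
      ≤ ℓ ^ (1 - α) + 2 / (1 - α) * ℓ ^ (1 - α) := le_trans step0 (add_le_add S1 S2)
    _ = (1 + 2 / (1 - α)) * ℓ ^ (1 - α) := by ring

lemma sigma_bound2 (m : ℕ) (a b : ℕ → ℝ) (x : ℝ)
    (hxa : ∀ j < m, x ≤ a j) (hab : ∀ j < m, a j ≤ b j) (hbx : ∀ j < m, b j ≤ x + 1)
    (hchain : ∀ j, j + 1 < m → b j ≤ a (j + 1)) (hx : 2 ≤ |x|) :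
    ∑ j ∈ Finset.range m, ∫ y in (a j)..(b j), g y ≤ 2 * |x| ^ (-α) := by
  have hgint : ∀ a b, IntervalIntegrable g volume a b :=
    g_intervalIntegrable hα0 hα1 hg0 hgle hgm
  have hsum := sum_intervalIntegral_le hg0 hgint m a b x (x + 1)
    (by linarith) hxa hab hbx hchain
  have hxpos : (0:ℝ) < |x| := by linarith
  have key : ∀ y ∈ Icc x (x + 1), g y ≤ 2 * |x| ^ (-α) := by
    intro y hy
    have h1 : g y ≤ |y| ^ (-α) := hgle y
    rcases le_abs.mp hx with h2 | h2
    · -- 2 ≤ x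
      have hyx : x ≤ |y| := by
        rw [abs_of_nonneg (by linarith [hy.1] : (0:ℝ) ≤ y)]; exact hy.1
      have := rpow_neg_anti (by linarith : (0:ℝ) < x) hyx hα0.le
      have hax : |x| = x := abs_of_nonneg (by linarith)
      have hnn : (0:ℝ) ≤ x ^ (-α) := Real.rpow_nonneg (by linarith) _
      rw [hax]
      nlinarith
    · -- 2 ≤ -x
      have hy2 : y ≤ x + 1 := hy.2
      have hyneg : y < 0 := by linarith
      have habs : |x| = -x := abs_of_neg (by linarith)
      have hyabs : |x| / 2 ≤ |y| := by
        rw [abs_of_neg hyneg, habs]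
        linarith
      have h3 := rpow_neg_anti (by linarith : (0:ℝ) < |x| / 2) hyabs hα0.le
      have h4 : (|x| / 2) ^ (-α) = |x| ^ (-α) * 2 ^ α := by
        rw [Real.div_rpow (abs_nonneg x) (by norm_num : (0:ℝ) ≤ 2),
          Real.rpow_neg (by norm_num : (0:ℝ) ≤ 2), div_inv_eq_mul]
      have h5 : (2:ℝ) ^ α ≤ 2 := by
        calc (2:ℝ) ^ α ≤ 2 ^ (1:ℝ) :=
          Real.rpow_le_rpow_of_exponent_le (by norm_num) (by linarith)
        _ = 2 := Real.rpow_one 2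
      have hnn : (0:ℝ) ≤ |x| ^ (-α) := Real.rpow_nonneg (abs_nonneg x) _
      nlinarith
  calc ∑ j ∈ Finset.range m, ∫ y in (a j)..(b j), g y
      ≤ ∫ y in x..(x + 1), g y := hsum
    _ ≤ ∫ y in x..(x + 1), (fun _ => 2 * |x| ^ (-α)) y := by
        exact intervalIntegral.integral_mono_on (by linarith) (hgint _ _)
          intervalIntegrable_const key
    _ = 2 * |x| ^ (-α) := by
        rw [intervalIntegral.integral_const, smul_eq_mul]
        ring

end

end Helpers

/-- If `f` is not absolutely continuous (witnessed by families of disjoint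
intervals of total length tending to `0` on which the variation of `f` stays
`≥ ε`), then the long-memory rate `sup_{partitions, λ̄} ∑ λᵢ·(f(tᵢ)−f(tᵢ₋₁)) −
Λ^{rl}_{t₁,…,t_k}(λ̄)` is `+∞`. -/
theorem stmt19
    {d : ℕ} (α p q : ℝ) (hα : 1 / 2 < α) (hα1 : α < 1)
    (hp0 : 0 ≤ p) (hp1 : p ≤ 1) (hq : q = 1 - p)
    (Λ : (Fin d → ℝ) → ℝ) (hconv : ConvexOn ℝ Set.univ Λ) (hΛ0 : Λ 0 = 0)
    (hquad : ∃ C δ : ℝ, 0 < δ ∧ 0 < C ∧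
      ∀ l : Fin d → ℝ, ‖l‖ ≤ δ → |Λ l| ≤ C * ‖l‖ ^ 2)
    (f : ℝ → Fin d → ℝ) (hf0 : f 0 = 0)
    (hfL1 : IntegrableOn f (Set.Ioc 0 1) volume)
    (ε : ℝ) (hε : 0 < ε)
    (kn : ℕ → ℕ) (r s : ℕ → ℕ → ℝ)
    (hord : ∀ n, ∀ i < kn n, 0 ≤ r n i ∧ r n i < s n i ∧ s n i ≤ 1 ∧
      (i + 1 < kn n → s n i ≤ r n (i + 1)))
    (hlen : Filter.Tendsto
      (fun n => ∑ i ∈ Finset.range (kn n), (s n i - r n i))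
      Filter.atTop (nhds 0))
    (hvar : ∀ n, ε ≤ ∑ i ∈ Finset.range (kn n), ‖f (s n i) - f (r n i)‖) :
    ∀ M : ℝ, ∃ (k : ℕ) (t : ℕ → ℝ) (lam : Fin k → Fin d → ℝ),
      t 0 = 0 ∧ (∀ i < k, t i ≤ t (i + 1)) ∧ t k ≤ 1 ∧
      M < (∑ i : Fin k, lam i ⬝ᵥ (f (t (i.val + 1)) - f (t i.val))) -
        ∫ x : ℝ, Λ ((1 - α) •
          ∑ i : Fin k,
            (∫ y in (x + t i.val)..(x + t (i.val + 1)),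
              |y| ^ (-α) * (if 0 ≤ y then p else q)) • lam i) := by
  intro M
  obtain ⟨C, δ, hδ, hC, hquad⟩ := hquad
  have hα0 : 0 < α := by linarith
  have h1α : (0:ℝ) < 1 - α := by linarith
  have hq0 : 0 ≤ q := by rw [hq]; linarith
  have hq1 : q ≤ 1 := by rw [hq]; linarith
  -- basic facts about the interval families
  have hr0 : ∀ n, ∀ j < kn n, 0 ≤ r n j := fun n j hj => (hord n j hj).1
  have hrs : ∀ n, ∀ j < kn n, r n j < s n j := fun n j hj => (hord n j hj).2.1
  have hs1 : ∀ n, ∀ j < kn n, s n j ≤ 1 := fun n j hj => (hord n j hj).2.2.1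
  have hcha : ∀ n j, j + 1 < kn n → s n j ≤ r n (j + 1) :=
    fun n j h => (hord n j (by omega)).2.2.2 h
  have hm : ∀ n, 1 ≤ kn n := by
    intro n
    by_contra h
    have h0 : kn n = 0 := by omega
    have := hvar n
    rw [h0] at this
    simp at this
    linarith
  set A : ℝ := (|M| + 2) / ε with hAdef
  have hApos : 0 < A := div_pos (by positivity) hε
  set c : ℝ := (1 - α) * A with hcdef
  have hcpos : 0 < c := mul_pos h1α hApos
  choose u hu1 hu2 using fun n j => exists_dual_sup (f (s n j) - f (r n j))
  set g : ℝ → ℝ := fun y => |y| ^ (-α) * (if 0 ≤ y then p else q) with hgdef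
  have hg0 : ∀ y, 0 ≤ g y := by
    intro y
    refine mul_nonneg (Real.rpow_nonneg (abs_nonneg y) _) ?_
    split <;> assumption
  have hgle : ∀ y, g y ≤ |y| ^ (-α) := by
    intro y
    have h1 : (if 0 ≤ y then p else q) ≤ 1 := by split <;> assumption
    have h2 : (0:ℝ) ≤ |y| ^ (-α) := Real.rpow_nonneg (abs_nonneg y) _
    calc g y ≤ |y| ^ (-α) * 1 := mul_le_mul_of_nonneg_left h1 h2
      _ = |y| ^ (-α) := mul_one _
  have hgm : Measurable g := by
    refine (measurable_id.abs.pow_const _).mul ?_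
    exact Measurable.ite measurableSet_Ici measurable_const measurable_const
  have hgint : ∀ a b, IntervalIntegrable g volume a b :=
    g_intervalIntegrable hα0 hα1 hg0 hgle hgm
  set ℓ : ℕ → ℝ := fun n => ∑ i ∈ Finset.range (kn n), (s n i - r n i) with hℓdef
  have hℓpos : ∀ n, 0 < ℓ n := by
    intro n
    refine Finset.sum_pos (fun j hj => sub_pos.mpr (hrs n j (Finset.mem_range.mp hj))) ?_
    exact ⟨0, Finset.mem_range.mpr (hm n)⟩
  -- the partition and the dual vectors
  set tf : ℕ → ℕ → ℝ := fun n j =>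
    if j = 0 then 0 else if j % 2 = 1 then r n (j / 2) else s n (j / 2 - 1) with htfdef
  set lamN : ℕ → ℕ → Fin d → ℝ := fun n j =>
    if j % 2 = 1 then A • u n (j / 2) else 0 with hlamdef
  have htf0 : ∀ n, tf n 0 = 0 := fun n => by simp [htfdef]
  have htfodd : ∀ n j, tf n (2 * j + 1) = r n j := by
    intro n j
    show (if 2 * j + 1 = 0 then (0:ℝ) else
      if (2 * j + 1) % 2 = 1 then r n ((2 * j + 1) / 2) else s n ((2 * j + 1) / 2 - 1)) = r n j
    rw [if_neg (by omega), if_pos (by omega)]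
    congr 1
    omega
  have htfeven : ∀ n j, tf n (2 * j + 2) = s n j := by
    intro n j
    show (if 2 * j + 2 = 0 then (0:ℝ) else
      if (2 * j + 2) % 2 = 1 then r n ((2 * j + 2) / 2) else s n ((2 * j + 2) / 2 - 1)) = s n j
    rw [if_neg (by omega), if_neg (by omega)]
    congr 1
    omega
  have hlamodd : ∀ n j, lamN n (2 * j + 1) = A • u n j := by
    intro n j
    show (if (2 * j + 1) % 2 = 1 then A • u n ((2 * j + 1) / 2) else 0) = A • u n j
    have hdiv : (2 * j + 1) / 2 = j := by omega
    rw [if_pos (by omega), hdiv]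
  have hlameven : ∀ n j, lamN n (2 * j) = 0 := by
    intro n j
    show (if (2 * j) % 2 = 1 then A • u n ((2 * j) / 2) else 0) = 0
    rw [if_neg (by omega)]
  -- the sum part
  have hsum_eq : ∀ n,
      (∑ i : Fin (2 * kn n), lamN n i.val ⬝ᵥ (f (tf n (i.val + 1)) - f (tf n i.val)))
        = A * ∑ j ∈ Finset.range (kn n), ‖f (s n j) - f (r n j)‖ := by
    intro n
    rw [Fin.sum_univ_eq_sum_range
      (fun j => lamN n j ⬝ᵥ (f (tf n (j + 1)) - f (tf n j))) (2 * kn n),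
      sum_range_two_mul', Finset.mul_sum]
    refine Finset.sum_congr rfl fun j hj => ?_
    have h1 : lamN n (2 * j) ⬝ᵥ (f (tf n (2 * j + 1)) - f (tf n (2 * j))) = 0 := by
      rw [hlameven, zero_dotProduct]
    have h2 : lamN n (2 * j + 1) ⬝ᵥ (f (tf n (2 * j + 1 + 1)) - f (tf n (2 * j + 1)))
        = A * ‖f (s n j) - f (r n j)‖ := by
      rw [show 2 * j + 1 + 1 = 2 * j + 2 from rfl, hlamodd, htfodd, htfeven,
        smul_dotProduct, hu2 n j, smul_eq_mul]
    rw [h1, h2, zero_add]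
  -- Σ and its bounds
  set Sg : ℕ → ℝ → ℝ := fun n x =>
    ∑ j ∈ Finset.range (kn n), ∫ y in (x + r n j)..(x + s n j), g y with hSgdef
  have hSg0 : ∀ n x, 0 ≤ Sg n x := by
    intro n x
    refine Finset.sum_nonneg fun j hj => ?_
    exact intervalIntegral.integral_nonneg
      (by linarith [hrs n j (Finset.mem_range.mp hj)]) (fun y _ => hg0 y)
  have hSB1 : ∀ n x, Sg n x ≤ (1 + 2 / (1 - α)) * (ℓ n) ^ (1 - α) := by
    intro n x
    refine sigma_bound1 hα0 hα1 hg0 hgle hgm (kn n) (fun j => x + r n j) (fun j => x + s n j) x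
      (fun j hj => by show x ≤ x + r n j; linarith [hr0 n j hj])
      (fun j hj => by show x + r n j ≤ x + s n j; linarith [hrs n j hj])
      (fun j hj => by show x + s n j ≤ x + 1; linarith [hs1 n j hj])
      (fun j hj => by show x + s n j ≤ x + r n (j + 1); linarith [hcha n j hj])
      (hℓpos n) ?_
    refine le_of_eq (Finset.sum_congr rfl fun j hj => by ring)
  have hSB2 : ∀ n x, 2 ≤ |x| → Sg n x ≤ 2 * |x| ^ (-α) := by
    intro n x hx
    exact sigma_bound2 hα0 hα1 hg0 hgle hgm (kn n) (fun j => x + r n j) (fun j => x + s n j) x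
      (fun j hj => by show x ≤ x + r n j; linarith [hr0 n j hj])
      (fun j hj => by show x + r n j ≤ x + s n j; linarith [hrs n j hj])
      (fun j hj => by show x + s n j ≤ x + 1; linarith [hs1 n j hj])
      (fun j hj => by show x + s n j ≤ x + r n (j + 1); linarith [hcha n j hj]) hx
  -- the functions appearing in the integral
  set Fn : ℕ → ℝ → ℝ := fun n x => Λ ((1 - α) •
    ∑ i : Fin (2 * kn n),
      (∫ y in (x + tf n i.val)..(x + tf n (i.val + 1)), g y) • lamN n i.val) with hFndef
  -- pairing bound on the norm of the inner sum
  have pairbound : ∀ n x,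
      ‖∑ i : Fin (2 * kn n),
        (∫ y in (x + tf n i.val)..(x + tf n (i.val + 1)), g y) • lamN n i.val‖
      ≤ A * Sg n x := by
    intro n x
    calc ‖∑ i : Fin (2 * kn n),
        (∫ y in (x + tf n i.val)..(x + tf n (i.val + 1)), g y) • lamN n i.val‖
        ≤ ∑ i : Fin (2 * kn n),
          ‖(∫ y in (x + tf n i.val)..(x + tf n (i.val + 1)), g y) • lamN n i.val‖ :=
          norm_sum_le _ _
      _ = ∑ j ∈ Finset.range (2 * kn n),
          ‖(∫ y in (x + tf n j)..(x + tf n (j + 1)), g y) • lamN n j‖ :=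
          Fin.sum_univ_eq_sum_range
            (fun j => ‖(∫ y in (x + tf n j)..(x + tf n (j + 1)), g y) • lamN n j‖) (2 * kn n)
      _ = ∑ j ∈ Finset.range (kn n),
          (‖(∫ y in (x + tf n (2 * j))..(x + tf n (2 * j + 1)), g y) • lamN n (2 * j)‖
            + ‖(∫ y in (x + tf n (2 * j + 1))..(x + tf n (2 * j + 1 + 1)), g y)
                • lamN n (2 * j + 1)‖) :=
          sum_range_two_mul' (kn n)
            (fun j => ‖(∫ y in (x + tf n j)..(x + tf n (j + 1)), g y) • lamN n j‖)
      _ ≤ ∑ j ∈ Finset.range (kn n), A * ∫ y in (x + r n j)..(x + s n j), g y := by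
          refine Finset.sum_le_sum fun j hj => ?_
          have hj' := Finset.mem_range.mp hj
          have e1 : ‖(∫ y in (x + tf n (2 * j))..(x + tf n (2 * j + 1)), g y)
              • lamN n (2 * j)‖ = 0 := by
            rw [hlameven, smul_zero, norm_zero]
          have hKnn : 0 ≤ ∫ y in (x + r n j)..(x + s n j), g y :=
            intervalIntegral.integral_nonneg (by linarith [hrs n j hj']) (fun y _ => hg0 y)
          have e2 : ‖(∫ y in (x + tf n (2 * j + 1))..(x + tf n (2 * j + 1 + 1)), g y)
              • lamN n (2 * j + 1)‖
              ≤ (∫ y in (x + r n j)..(x + s n j), g y) * A := by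
            rw [show 2 * j + 1 + 1 = 2 * j + 2 from rfl, htfodd, htfeven, hlamodd,
              norm_smul, Real.norm_eq_abs, abs_of_nonneg hKnn]
            refine mul_le_mul_of_nonneg_left ?_ hKnn
            rw [norm_smul, Real.norm_eq_abs, abs_of_nonneg hApos.le]
            calc A * ‖u n j‖ ≤ A * 1 := mul_le_mul_of_nonneg_left (hu1 n j) hApos.le
              _ = A := mul_one A
          rw [e1, zero_add]
          calc _ ≤ (∫ y in (x + r n j)..(x + s n j), g y) * A := e2
            _ = A * ∫ y in (x + r n j)..(x + s n j), g y := mul_comm _ _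
      _ = A * Sg n x := (Finset.mul_sum _ _ _).symm
  have hFargle : ∀ n x, ‖(1 - α) •
      ∑ i : Fin (2 * kn n),
        (∫ y in (x + tf n i.val)..(x + tf n (i.val + 1)), g y) • lamN n i.val‖
      ≤ c * Sg n x := by
    intro n x
    rw [norm_smul, Real.norm_eq_abs, abs_of_pos h1α, hcdef, mul_assoc]
    exact mul_le_mul_of_nonneg_left (pairbound n x) h1α.le
  -- β and its convergence
  set β : ℕ → ℝ := fun n => (1 + 2 / (1 - α)) * (ℓ n) ^ (1 - α) with hβdef
  have hSgβ : ∀ n x, Sg n x ≤ β n := fun n x => hSB1 n x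
  have hβtend : Filter.Tendsto β Filter.atTop (nhds 0) := by
    have h1 : Filter.Tendsto (fun n => (ℓ n) ^ (1 - α)) Filter.atTop (nhds 0) := by
      have hcont := (Real.continuousAt_rpow_const 0 (1 - α) (Or.inr h1α.le)).tendsto
      have h2 := hcont.comp hlen
      rw [Real.zero_rpow (ne_of_gt h1α)] at h2
      exact h2
    have := h1.const_mul (1 + 2 / (1 - α))
    simpa using this
  -- majorant
  set hmaj : ℝ → ℝ := fun x => 2 * (max |x| 2) ^ (-α) with hmajdef
  have hmaj0 : ∀ x, 0 ≤ hmaj x := by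
    intro x
    have : (0:ℝ) < max |x| 2 := lt_of_lt_of_le two_pos (le_max_right _ _)
    positivity
  have hSgmaj : ∀ n x, β n ≤ 2 ^ ((1:ℝ) - α) → Sg n x ≤ hmaj x := by
    intro n x hβn
    rcases le_or_gt 2 |x| with hx | hx
    · show Sg n x ≤ 2 * (max |x| 2) ^ (-α)
      rw [max_eq_left hx]
      exact hSB2 n x hx
    · show Sg n x ≤ 2 * (max |x| 2) ^ (-α)
      rw [max_eq_right hx.le]
      have h2 : (2:ℝ) * 2 ^ (-α) = 2 ^ ((1:ℝ) - α) := by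
        rw [show (2:ℝ) * 2 ^ (-α) = 2 ^ (1:ℝ) * 2 ^ (-α) by rw [Real.rpow_one],
          ← Real.rpow_add two_pos]
        ring_nf
      rw [h2]
      exact le_trans (hSgβ n x) hβn
  -- bound function for dominated convergence
  set bound : ℝ → ℝ := fun x => C * (c * hmaj x) ^ 2 with hbounddef
  have hbound_int : Integrable bound volume := by
    have h2α : -(2 * α) < -1 := by linarith
    have heq : ∀ x : ℝ, bound x = (4 * C * c ^ 2) * (max |x| 2) ^ (-(2 * α)) := by
      intro x
      have ht : (0:ℝ) < max |x| 2 := lt_of_lt_of_le two_pos (le_max_right _ _)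
      show C * (c * (2 * (max |x| 2) ^ (-α))) ^ 2 = _
      rw [show -(2 * α) = -α + -α by ring, Real.rpow_add ht]
      ring
    have h3 := (integrable_max_abs_rpow h2α).const_mul (4 * C * c ^ 2)
    exact h3.congr (Filter.Eventually.of_forall fun x => (heq x).symm)
  -- continuity of Fn
  have hPcont : Continuous fun v : ℝ => ∫ y in (0:ℝ)..v, g y :=
    intervalIntegral.continuous_primitive hgint 0
  have hKcont : ∀ aa bb : ℝ, Continuous fun x : ℝ => ∫ y in (x + aa)..(x + bb), g y := by
    intro aa bb
    have heq : (fun x : ℝ => ∫ y in (x + aa)..(x + bb), g y)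
        = fun x : ℝ => (∫ y in (0:ℝ)..(x + bb), g y) - ∫ y in (0:ℝ)..(x + aa), g y := by
      funext x
      rw [intervalIntegral.integral_interval_sub_left (hgint 0 (x + bb)) (hgint 0 (x + aa))]
    rw [heq]
    exact (hPcont.comp (continuous_id.add continuous_const)).sub
      (hPcont.comp (continuous_id.add continuous_const))
  have hΛcont : Continuous Λ := hconv.locallyLipschitz.continuous
  have hFncont : ∀ n, Continuous (Fn n) := by
    intro n
    refine hΛcont.comp ?_
    refine Continuous.fun_const_smul ?_ _
    exact continuous_finset_sum _ fun i _ =>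
      (hKcont (tf n i.val) (tf n (i.val + 1))).smul continuous_const
  -- eventual bounds
  have hFnbound : ∀ n, β n ≤ 2 ^ ((1:ℝ) - α) → c * β n ≤ δ → ∀ x,
      |Fn n x| ≤ C * (c * β n) ^ 2 ∧ |Fn n x| ≤ bound x := by
    intro n h1 h2 x
    have hF := hFargle n x
    have hcβ : c * Sg n x ≤ c * β n := mul_le_mul_of_nonneg_left (hSgβ n x) hcpos.le
    have hFδ : ‖(1 - α) • ∑ i : Fin (2 * kn n),
        (∫ y in (x + tf n i.val)..(x + tf n (i.val + 1)), g y) • lamN n i.val‖ ≤ δ :=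
      le_trans hF (le_trans hcβ h2)
    have hquadF := hquad _ hFδ
    constructor
    · refine le_trans hquadF ?_
      refine mul_le_mul_of_nonneg_left ?_ hC.le
      exact pow_le_pow_left₀ (norm_nonneg _) (le_trans hF hcβ) 2
    · refine le_trans hquadF ?_
      show C * _ ≤ C * (c * hmaj x) ^ 2
      refine mul_le_mul_of_nonneg_left ?_ hC.le
      refine pow_le_pow_left₀ (norm_nonneg _) ?_ 2
      exact le_trans hF (mul_le_mul_of_nonneg_left (hSgmaj n x h1) hcpos.le)
  have hev : ∀ᶠ n in Filter.atTop, β n ≤ 2 ^ ((1:ℝ) - α) ∧ c * β n ≤ δ := by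
    have h1 := hβtend.eventually_le_const
      (show (0:ℝ) < 2 ^ ((1:ℝ) - α) from Real.rpow_pos_of_pos two_pos _)
    have h2 : Filter.Tendsto (fun n => c * β n) Filter.atTop (nhds 0) := by
      simpa using hβtend.const_mul c
    exact h1.and (h2.eventually_le_const hδ)
  -- pointwise convergence
  have hlim0 : ∀ x : ℝ, Filter.Tendsto (fun n => Fn n x) Filter.atTop (nhds 0) := by
    intro x
    have hb2 : Filter.Tendsto (fun n => C * (c * β n) ^ 2) Filter.atTop (nhds 0) := by
      have := ((hβtend.const_mul c).pow 2).const_mul C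
      simpa using this
    have hb2n : Filter.Tendsto (fun n => -(C * (c * β n) ^ 2)) Filter.atTop (nhds 0) := by
      simpa using hb2.neg
    refine tendsto_of_tendsto_of_tendsto_of_le_of_le' hb2n hb2 ?_ ?_
    · filter_upwards [hev] with n hn
      exact (abs_le.mp ((hFnbound n hn.1 hn.2 x).1)).1
    · filter_upwards [hev] with n hn
      exact (abs_le.mp ((hFnbound n hn.1 hn.2 x).1)).2
  -- dominated convergence
  have hDCT : Filter.Tendsto (fun n => ∫ x, Fn n x) Filter.atTop (nhds 0) := by
    have hb : ∀ᶠ n in Filter.atTop, ∀ᵐ x : ℝ ∂volume, ‖Fn n x‖ ≤ bound x := by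
      filter_upwards [hev] with n hn
      refine Filter.Eventually.of_forall fun x => ?_
      rw [Real.norm_eq_abs]
      exact (hFnbound n hn.1 hn.2 x).2
    have := MeasureTheory.tendsto_integral_filter_of_dominated_convergence (μ := volume)
      (F := Fn) (f := fun _ => (0:ℝ)) bound
      (Filter.Eventually.of_forall fun n => (hFncont n).aestronglyMeasurable)
      hb hbound_int (Filter.Eventually.of_forall fun x => hlim0 x)
    simpa using this
  obtain ⟨n₀, hn₀⟩ := (hDCT.eventually_lt_const (by norm_num : (0:ℝ) < 1)).exists
  refine ⟨2 * kn n₀, tf n₀, fun i => lamN n₀ i.val, htf0 n₀, ?_, ?_, ?_⟩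
  · -- monotonicity of the partition
    intro i hi
    obtain ⟨j, hj | hj⟩ : ∃ j, i = 2 * j ∨ i = 2 * j + 1 := ⟨i / 2, by omega⟩
    · subst hj
      rcases Nat.eq_zero_or_pos j with rfl | hjpos
      · have h1 := htfodd n₀ 0
        simp only [Nat.mul_zero, Nat.zero_add] at h1 ⊢
        rw [htf0 n₀, h1]
        exact hr0 n₀ 0 (by omega)
      · have e1 : tf n₀ (2 * j) = s n₀ (j - 1) := by
          have h := htfeven n₀ (j - 1)
          rw [show 2 * (j - 1) + 2 = 2 * j by omega] at h
          exact h
        have e2 : tf n₀ (2 * j + 1) = r n₀ j := htfodd n₀ j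
        rw [e1, e2]
        have h := hcha n₀ (j - 1) (by omega)
        rwa [show j - 1 + 1 = j by omega] at h
    · subst hj
      rw [htfodd n₀ j, show 2 * j + 1 + 1 = 2 * j + 2 from rfl, htfeven n₀ j]
      exact (hrs n₀ j (by omega)).le
  · -- last point ≤ 1
    have hk := hm n₀
    have e1 : tf n₀ (2 * kn n₀) = s n₀ (kn n₀ - 1) := by
      have h := htfeven n₀ (kn n₀ - 1)
      rw [show 2 * (kn n₀ - 1) + 2 = 2 * kn n₀ by omega] at h
      exact h
    rw [e1]
    exact hs1 n₀ (kn n₀ - 1) (by omega)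
  · -- the main estimate
    have hAV : A * ε ≤ A * ∑ j ∈ Finset.range (kn n₀), ‖f (s n₀ j) - f (r n₀ j)‖ :=
      mul_le_mul_of_nonneg_left (hvar n₀) hApos.le
    have hAε : A * ε = |M| + 2 := by
      rw [hAdef, div_mul_cancel₀ _ (ne_of_gt hε)]
    show M < (∑ i : Fin (2 * kn n₀), lamN n₀ i.val ⬝ᵥ
        (f (tf n₀ (i.val + 1)) - f (tf n₀ i.val))) - ∫ x, Fn n₀ x
    rw [hsum_eq n₀]
    linarith [le_abs_self M]
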